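/- Let G be a C₄-free graph on n vertices whose spectral radius μ satisfies μ² − μ = n − 1. Then every two distinct vertices of G have exactly one common neighbor. -/

import Mathlib

open Matrix Finset

def IsSpecRad {n : ℕ} (A : Matrix (Fin n) (Fin n) ℝ) (μ : ℝ) : Prop :=
  Module.End.HasEigenvalue A.mulVecLin μ ∧
    ∀ ν : ℝ, Module.End.HasEigenvalue A.mulVecLin ν → ν ≤ μ

def Has4Cycle {V : Type*} (G : SimpleGraph V) : Prop :=
  ∃ a b c d : V, G.Adj a b ∧ G.Adj b c ∧ G.Adj c d ∧ G.Adj d a ∧ a ≠ c ∧ b ≠ d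

section Aux

variable {n : ℕ} {G : SimpleGraph (Fin n)} [DecidableRel G.Adj]

/-- In a `C₄`-free graph, two distinct vertices have at most one common neighbor. -/
lemma common_le_one (hC4 : ¬ Has4Cycle G) {u v : Fin n} (huv : u ≠ v) :
    (G.neighborFinset u ∩ G.neighborFinset v).card ≤ 1 := by
  by_contra h
  push_neg at h
  obtain ⟨a, ha, b, hb, hab⟩ := Finset.one_lt_card.1 h
  simp only [Finset.mem_inter, SimpleGraph.mem_neighborFinset] at ha hb
  exact hC4 ⟨u, a, v, b, ha.1, (G.adj_comm _ _).1 ha.2, hb.2, (G.adj_comm _ _).1 hb.1, huv, hab⟩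

/-- Entries of the square of the adjacency matrix count common neighbors. -/
lemma adj_sq_apply (u w : Fin n) : (G.adjMatrix ℝ * G.adjMatrix ℝ) u w
    = ((G.neighborFinset u ∩ G.neighborFinset w).card : ℝ) := by
  have h : G.neighborFinset u ∩ G.neighborFinset w
      = Finset.univ.filter (fun v => G.Adj u v ∧ G.Adj v w) := by
    ext v
    simp [SimpleGraph.mem_neighborFinset, G.adj_comm w v]
  rw [h, Finset.card_filter, Matrix.mul_apply]
  push_cast
  refine Finset.sum_congr rfl fun v _ => ?_
  by_cases h1 : G.Adj u v <;> by_cases h2 : G.Adj v w <;> simp [h1, h2]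

lemma row_sum (u : Fin n) : ∑ w, G.adjMatrix ℝ u w = (G.degree u : ℝ) := by
  simp [SimpleGraph.adjMatrix_apply, Finset.sum_boole, SimpleGraph.degree,
    SimpleGraph.neighborFinset_eq_filter]

/-- Existence of a nonnegative (Perron) eigenvector for the spectral radius. -/
lemma exists_perron (G : SimpleGraph (Fin n)) [DecidableRel G.Adj] {μ : ℝ}
    (hμ : IsSpecRad (G.adjMatrix ℝ) μ) :
    ∃ y : Fin n → ℝ, y ≠ 0 ∧ (∀ i, 0 ≤ y i) ∧ G.adjMatrix ℝ *ᵥ y = μ • y := by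
  set A := G.adjMatrix ℝ with hA
  obtain ⟨x, hx⟩ := hμ.1.exists_hasEigenvector
  have hAx : A *ᵥ x = μ • x := by
    simpa [Matrix.mulVecLin_apply] using hx.apply_eq_smul
  set B := μ • (1 : Matrix (Fin n) (Fin n) ℝ) - A with hBdef
  have hB : B.IsHermitian := by
    have h1 : A.IsHermitian := by
      rw [hA]; unfold Matrix.IsHermitian; ext i j
      simp [Matrix.conjTranspose_apply, G.adj_comm]
    refine Matrix.IsHermitian.sub ?_ h1
    unfold Matrix.IsHermitian; simp
  have hpsd : B.PosSemidef := by
    apply hB.posSemidef_iff_eigenvalues_nonneg.2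
    intro i
    have hv := hB.mulVec_eigenvectorBasis i
    set w : Fin n → ℝ := ⇑(hB.eigenvectorBasis i) with hw
    have hw0 : w ≠ 0 := by
      intro h
      exact hB.eigenvectorBasis.orthonormal.ne_zero i (by ext t; exact congrFun h t)
    set lam := hB.eigenvalues i with hlam
    have hAw : A *ᵥ w = (μ - lam) • w := by
      have h2 : μ • w - A *ᵥ w = lam • w := by
        rw [hBdef, Matrix.sub_mulVec, Matrix.smul_mulVec, Matrix.one_mulVec] at hv
        exact hv
      rw [sub_smul, eq_sub_iff_add_eq, add_comm]
      rw [sub_eq_iff_eq_add] at h2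
      exact h2.symm
    have hev : Module.End.HasEigenvalue A.mulVecLin (μ - lam) := by
      apply Module.End.hasEigenvalue_of_hasEigenvector (x := w)
      exact ⟨Module.End.mem_eigenspace_iff.2 (by simpa [Matrix.mulVecLin_apply] using hAw), hw0⟩
    have := hμ.2 _ hev
    show (0:ℝ) ≤ lam
    linarith
  refine ⟨fun i => |x i|, ?_, fun i => abs_nonneg _, ?_⟩
  · intro h
    apply hx.2
    funext i
    have := congrFun h i
    simpa [abs_eq_zero] using this
  · set y : Fin n → ℝ := fun i => |x i| with hy
    have hyy : y ⬝ᵥ y = x ⬝ᵥ x := by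
      simp [dotProduct, hy, abs_mul_abs_self]
    have hxAx : x ⬝ᵥ (A *ᵥ x) = μ * (x ⬝ᵥ x) := by
      rw [hAx, dotProduct_smul, smul_eq_mul]
    have hyAy : x ⬝ᵥ (A *ᵥ x) ≤ y ⬝ᵥ (A *ᵥ y) := by
      simp only [dotProduct, mulVec, Finset.mul_sum]
      apply Finset.sum_le_sum
      intro i _
      apply Finset.sum_le_sum
      intro j _
      have h0 : (0:ℝ) ≤ A i j := by rw [hA]; simp [SimpleGraph.adjMatrix_apply]; positivity
      calc x i * (A i j * x j) = A i j * (x i * x j) := by ring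
        _ ≤ A i j * |x i * x j| := by
            apply mul_le_mul_of_nonneg_left (le_abs_self _) h0
        _ = y i * (A i j * y j) := by rw [abs_mul]; ring
    have hzero : y ⬝ᵥ (B *ᵥ y) = 0 := by
      have h1 : 0 ≤ y ⬝ᵥ (B *ᵥ y) := by simpa [star_trivial] using hpsd.dotProduct_mulVec_nonneg y
      have h2 : y ⬝ᵥ (B *ᵥ y) ≤ 0 := by
        have e : ∀ z : Fin n → ℝ, z ⬝ᵥ (B *ᵥ z) = μ * (z ⬝ᵥ z) - z ⬝ᵥ (A *ᵥ z) := by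
          intro z
          rw [hBdef, Matrix.sub_mulVec, dotProduct_sub, Matrix.smul_mulVec,
            Matrix.one_mulVec, dotProduct_smul, smul_eq_mul]
        rw [e, hyy]
        have := e x
        rw [hxAx] at this
        linarith
      linarith
    have hBy : B *ᵥ y = 0 := by
      apply (hpsd.dotProduct_mulVec_zero_iff y).1
      simpa [star_trivial] using hzero
    have h3 : μ • y - A *ᵥ y = 0 := by
      rw [hBdef, Matrix.sub_mulVec, Matrix.smul_mulVec, Matrix.one_mulVec] at hBy
      exact hBy
    rw [sub_eq_zero] at h3
    exact h3.symm

/-- Equality analysis at a vertex of maximal Perron weight. -/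
lemma key {μ : ℝ} (hC4 : ¬ Has4Cycle G) (heq : μ ^ 2 - μ = (n : ℝ) - 1)
    {y : Fin n → ℝ} (hy0 : ∀ i, 0 ≤ y i) (hAy : G.adjMatrix ℝ *ᵥ y = μ • y)
    {u : Fin n} (hmax : ∀ w, y w ≤ y u) (hupos : 0 < y u) :
    ∀ w, w ≠ u → (G.neighborFinset u ∩ G.neighborFinset w).card = 1 ∧
      (¬ G.Adj u w → y w = y u) := by
  have hn : 1 ≤ n := u.pos
  set c : Fin n → ℝ := fun w => ((G.neighborFinset u ∩ G.neighborFinset w).card : ℝ) with hc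
  have hAyu : ∀ i, ∑ w, G.adjMatrix ℝ i w * y w = μ * y i := by
    intro i
    have := congrFun hAy i
    simpa [Matrix.mulVec, dotProduct] using this
  have hA2yu : ∑ w, (G.adjMatrix ℝ * G.adjMatrix ℝ) u w * y w = μ ^ 2 * y u := by
    have h2 : (G.adjMatrix ℝ * G.adjMatrix ℝ) *ᵥ y = (μ ^ 2) • y := by
      rw [← Matrix.mulVec_mulVec, hAy, Matrix.mulVec_smul, hAy, smul_smul]
      ring_nf
    have := congrFun h2 u
    simpa [Matrix.mulVec, dotProduct] using this
  set g : Fin n → ℝ := fun w => (c w - G.adjMatrix ℝ u w) * y w with hg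
  set h : Fin n → ℝ := fun w =>
    if w = u then (G.degree u : ℝ) * y u else (1 - G.adjMatrix ℝ u w) * y u with hh
  have hsum_g : ∑ w, g w = ((n : ℝ) - 1) * y u := by
    have e1 : ∑ w, g w
        = ∑ w, (G.adjMatrix ℝ * G.adjMatrix ℝ) u w * y w - ∑ w, G.adjMatrix ℝ u w * y w := by
      rw [← Finset.sum_sub_distrib]
      refine Finset.sum_congr rfl fun w _ => ?_
      simp only [hg, hc, adj_sq_apply]
      ring
    rw [e1, hA2yu, hAyu u, ← heq]
    ring
  have hsum_h : ∑ w, h w = ((n : ℝ) - 1) * y u := by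
    have h1 : ∑ w ∈ Finset.univ.erase u, h w
        = ∑ w ∈ Finset.univ.erase u, (1 - G.adjMatrix ℝ u w) * y u := by
      refine Finset.sum_congr rfl fun w hw => ?_
      simp only [hh, if_neg (Finset.mem_erase.1 hw).1]
    have h2 : ∑ w ∈ Finset.univ.erase u, (1 - G.adjMatrix ℝ u w) * y u
        = (((n : ℝ) - 1) - (G.degree u : ℝ)) * y u := by
      rw [← Finset.sum_mul]
      congr 1
      rw [Finset.sum_sub_distrib, Finset.sum_const, Finset.card_erase_of_mem (Finset.mem_univ u),
        Finset.card_univ, Fintype.card_fin, Finset.sum_erase_eq_sub (Finset.mem_univ u), row_sum]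
      have hAuu : G.adjMatrix ℝ u u = 0 := by simp
      rw [hAuu, nsmul_eq_mul, mul_one, Nat.cast_sub hn]
      push_cast
      ring
    have hu : h u = (G.degree u : ℝ) * y u := by simp [hh]
    rw [← Finset.add_sum_erase _ h (Finset.mem_univ u), hu, h1, h2]
    ring
  have hle : ∀ w ∈ Finset.univ, g w ≤ h w := by
    intro w _
    by_cases hwu : w = u
    · subst hwu
      have h1 : G.adjMatrix ℝ w w = 0 := by simp
      have h2 : c w = (G.degree w : ℝ) := by
        simp only [hc, Finset.inter_self, SimpleGraph.card_neighborFinset_eq_degree]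
      simp only [hg, hh, if_pos rfl, h1, h2]
      ring_nf
      exact le_refl _
    · have hcle : c w ≤ 1 := by
        simp only [hc]
        exact_mod_cast common_le_one hC4 (fun hh' => hwu hh'.symm)
      have hc0 : 0 ≤ c w := by simp only [hc]; positivity
      simp only [hg, hh, if_neg hwu]
      by_cases hadj : G.Adj u w
      · have h1 : G.adjMatrix ℝ u w = 1 := by simp [hadj]
        rw [h1]
        have : (c w - 1) * y w ≤ 0 := mul_nonpos_of_nonpos_of_nonneg (by linarith) (hy0 w)
        linarith
      · have h1 : G.adjMatrix ℝ u w = 0 := by simp [hadj]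
        rw [h1]
        calc (c w - 0) * y w = c w * y w := by ring
          _ ≤ 1 * y w := mul_le_mul_of_nonneg_right hcle (hy0 w)
          _ ≤ 1 * y u := by simpa using hmax w
          _ = (1 - 0) * y u := by ring
  have hpt : ∀ w ∈ Finset.univ, g w = h w :=
    (Finset.sum_eq_sum_iff_of_le hle).1 (hsum_g.trans hsum_h.symm)
  intro w hwu
  have hgw := hpt w (Finset.mem_univ w)
  simp only [hg, hh, if_neg hwu] at hgw
  have hcle : c w ≤ 1 := by
    simp only [hc]
    exact_mod_cast common_le_one hC4 (fun hh' => hwu hh'.symm)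
  have hc0 : 0 ≤ c w := by simp only [hc]; positivity
  have cast1 : c w = 1 → (G.neighborFinset u ∩ G.neighborFinset w).card = 1 := by
    intro hcw
    have : ((G.neighborFinset u ∩ G.neighborFinset w).card : ℝ) = 1 := by
      simpa [hc] using hcw
    exact_mod_cast this
  by_cases hadj : G.Adj u w
  · have h1 : G.adjMatrix ℝ u w = 1 := by simp [hadj]
    rw [h1] at hgw
    have hyw : 0 < y w := by
      have hmu : μ * y w = ∑ z ∈ G.neighborFinset w, y z := by
        rw [← hAyu w]
        simpa [dotProduct] using SimpleGraph.adjMatrix_dotProduct G w y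
      have hge : y u ≤ ∑ z ∈ G.neighborFinset w, y z := by
        apply Finset.single_le_sum (fun z _ => hy0 z)
        rw [SimpleGraph.mem_neighborFinset]
        exact (G.adj_comm u w).1 hadj
      rcases lt_or_eq_of_le (hy0 w) with h' | h'
      · exact h'
      · exfalso
        rw [← h', mul_zero] at hmu
        linarith
    have hcw : c w = 1 := by
      have h2 : (c w - 1) * y w = 0 := by linarith
      rcases mul_eq_zero.1 h2 with h3 | h3
      · linarith
      · exact absurd h3 (ne_of_gt hyw)
    exact ⟨cast1 hcw, fun hna => absurd hadj hna⟩
  · have h1 : G.adjMatrix ℝ u w = 0 := by simp [hadj]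
    rw [h1] at hgw
    have hyweq : y w = y u := by
      have h2 : c w * y w = y u := by linarith
      have h3 : c w * y w ≤ y w := by
        calc c w * y w ≤ 1 * y w := mul_le_mul_of_nonneg_right hcle (hy0 w)
          _ = y w := one_mul _
      have := hmax w
      linarith
    have hcw : c w = 1 := by
      have h2 : c w * y u = 1 * y u := by rw [← hyweq, one_mul]; linarith
      exact mul_right_cancel₀ (ne_of_gt hupos) h2
    exact ⟨cast1 hcw, fun _ => hyweq⟩

end Aux

theorem equality_friendship (n : ℕ) (G : SimpleGraph (Fin n)) [DecidableRel G.Adj] (μ : ℝ)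
    (hC4 : ¬ Has4Cycle G)
    (hμ : IsSpecRad (G.adjMatrix ℝ) μ)
    (heq : μ ^ 2 - μ = (n : ℝ) - 1) :
    ∀ u v : Fin n, u ≠ v → (G.neighborFinset u ∩ G.neighborFinset v).card = 1 := by
  intro u0 v0 huv
  obtain ⟨y, hyne, hy0, hAy⟩ := exists_perron G hμ
  obtain ⟨u, -, humax'⟩ := Finset.exists_max_image Finset.univ y ⟨u0, Finset.mem_univ u0⟩
  have hmax : ∀ w, y w ≤ y u := fun w => humax' w (Finset.mem_univ w)
  have hupos : 0 < y u := by
    obtain ⟨i, hi⟩ : ∃ i, y i ≠ 0 := by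
      by_contra hcon
      push_neg at hcon
      exact hyne (funext hcon)
    exact lt_of_lt_of_le ((hy0 i).lt_of_ne (Ne.symm hi)) (hmax i)
  by_cases h0 : y u0 = y u
  · have hmax0 : ∀ w, y w ≤ y u0 := fun w => h0 ▸ hmax w
    exact (key hC4 heq hy0 hAy hmax0 (h0 ▸ hupos) v0 (Ne.symm huv)).1
  · by_cases h1 : y v0 = y u
    · have hmax1 : ∀ w, y w ≤ y v0 := fun w => h1 ▸ hmax w
      rw [Finset.inter_comm]
      exact (key hC4 heq hy0 hAy hmax1 (h1 ▸ hupos) u0 huv).1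
    · have hadjmax : ∀ m, y m = y u → G.Adj m u0 ∧ G.Adj m v0 := by
        intro m hm
        have hmaxm : ∀ w, y w ≤ y m := fun w => hm ▸ hmax w
        have hmpos : 0 < y m := hm ▸ hupos
        constructor
        · by_contra hna
          have hne : u0 ≠ m := fun he => h0 (by rw [he, hm])
          exact h0 (((key hC4 heq hy0 hAy hmaxm hmpos u0 hne).2 hna).trans hm)
        · by_contra hna
          have hne : v0 ≠ m := fun he => h1 (by rw [he, hm])
          exact h1 (((key hC4 heq hy0 hAy hmaxm hmpos v0 hne).2 hna).trans hm)
      by_cases hM : ∀ m, y m = y u → m = u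
      · obtain ⟨ha0, hb0⟩ := hadjmax u rfl
        have hmem : u ∈ G.neighborFinset u0 ∩ G.neighborFinset v0 := by
          simp only [Finset.mem_inter, SimpleGraph.mem_neighborFinset]
          exact ⟨(G.adj_comm _ _).1 ha0, (G.adj_comm _ _).1 hb0⟩
        exact le_antisymm (common_le_one hC4 huv) (Finset.card_pos.2 ⟨u, hmem⟩)
      · push_neg at hM
        obtain ⟨m, hm, hmne⟩ := hM
        have h2 := (key hC4 heq hy0 hAy hmax hupos m hmne).1
        have hu0mem : u0 ∈ G.neighborFinset u ∩ G.neighborFinset m := by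
          simp only [Finset.mem_inter, SimpleGraph.mem_neighborFinset]
          exact ⟨(hadjmax u rfl).1, (hadjmax m hm).1⟩
        have hv0mem : v0 ∈ G.neighborFinset u ∩ G.neighborFinset m := by
          simp only [Finset.mem_inter, SimpleGraph.mem_neighborFinset]
          exact ⟨(hadjmax u rfl).2, (hadjmax m hm).2⟩
        exact absurd (Finset.card_le_one.1 (le_of_eq h2) _ hu0mem _ hv0mem) huv
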